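/- arXiv:1110.2248 — 6 statements merged into one kernel-verified Lean document; each statement's English description precedes it below -/
import Mathlib

section
/- Let R = ⊕_{n∈ℤ} R_n be a ℤ-graded ring, let n ≠ 0, and let a ∈ R_n be a homogeneous element of degree n. Then 1 + a is invertible in R if and only if a is nilpotent. -/
/-- **Bergman's theorem, part (ii)**: if `R = ⊕_{n ∈ ℤ} R_n` is a `ℤ`-graded ring, `n ≠ 0`,
and `a ∈ R_n` is a homogeneous element of degree `n`, then `1 + a` is invertible in `R`
if and only if `a` is nilpotent. -/
theorem isUnit_one_add_iff_isNilpotent_of_zgraded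
    {R σ : Type*} [Ring R] [SetLike σ R] [AddSubgroupClass σ R]
    (𝒜 : ℤ → σ) [GradedRing 𝒜]
    (n : ℤ) (hn : n ≠ 0) (a : R) (ha : a ∈ 𝒜 n) :
    IsUnit (1 + a) ↔ IsNilpotent a := by
  classical
  constructor
  · rintro ⟨u, hu⟩
    set a' : R := -a with ha'def
    have ha' : a' ∈ 𝒜 n := neg_mem ha
    set b : R := ↑u⁻¹ with hbdef
    have heq : b + a * b = 1 := by
      have : (1 + a) * b = 1 := by rw [← hu]; exact u.mul_inv
      rw [← this]; noncomm_ring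
    have hb1 : b = 1 + a' * b := by
      rw [ha'def, neg_mul, ← sub_eq_add_neg]
      exact eq_sub_of_add_eq heq
    set c : ℤ → R := fun k => (DirectSum.decompose 𝒜 b k : R) with hc
    have key : ∀ k : ℤ, c k = (if k = 0 then (1:R) else 0) + a' * c (k - n) := by
      intro k
      have h1 : c k = (DirectSum.decompose 𝒜 (1 + a' * b) k : R) := by rw [hc]; rw [← hb1]
      have h2 : (DirectSum.decompose 𝒜 (a' * b) k : R) = a' * c (k - n) := by
        have := DirectSum.coe_decompose_mul_add_of_left_mem 𝒜 (j := k - n) ha' (b := b)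
        rwa [show n + (k - n) = k by ring] at this
      have h3 : (DirectSum.decompose 𝒜 (1:R) k : R) = if k = 0 then (1:R) else 0 := by
        split_ifs with h
        · subst h; exact DirectSum.decompose_of_mem_same 𝒜 (SetLike.one_mem_graded 𝒜)
        · exact DirectSum.decompose_of_mem_ne 𝒜 (SetLike.one_mem_graded 𝒜) (Ne.symm h)
      rw [h1, DirectSum.decompose_add, DirectSum.add_apply, AddMemClass.coe_add, h2, h3]
    -- support bound
    set N : ℕ := (DirectSum.decompose 𝒜 b).support.sup fun k => k.natAbs with hN
    have hsupp : ∀ k : ℤ, N < k.natAbs → c k = 0 := by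
      intro k hk
      by_contra hne
      have hmem : k ∈ (DirectSum.decompose 𝒜 b).support := by
        rw [DFinsupp.mem_support_iff]
        intro h0
        apply hne
        rw [hc]
        simp [h0]
      have h2 : k.natAbs ≤ N := Finset.le_sup (f := fun k : ℤ => k.natAbs) hmem
      exact absurd hk (not_lt.mpr h2)
    have hnabs : 1 ≤ n.natAbs := Int.natAbs_pos.mpr hn
    -- chain 1 : c (m * n) = a'^m * c 0
    have claim1 : ∀ m : ℕ, c ((m : ℤ) * n) = a' ^ m * c 0 := by
      intro m
      induction m with
      | zero => simp
      | succ m ih =>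
        have hk : ((m : ℤ) + 1) * n ≠ 0 := by
          intro h
          rcases mul_eq_zero.mp h with h | h
          · omega
          · exact hn h
        have := key (((m : ℤ) + 1) * n)
        rw [if_neg hk, zero_add, show ((m : ℤ) + 1) * n - n = (m : ℤ) * n by ring, ih] at this
        rw [show ((m + 1 : ℕ) : ℤ) = (m : ℤ) + 1 by push_cast; ring, this, pow_succ', mul_assoc]
    have hz : a' ^ (N + 1) * c 0 = 0 := by
      have h0 : c (((N + 1 : ℕ) : ℤ) * n) = 0 := by
        apply hsupp
        rw [Int.natAbs_mul]
        simp only [Int.natAbs_natCast]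
        nlinarith
      rw [claim1] at h0
      exact h0
    -- chain 2
    have claim2 : ∀ m : ℕ, a' ^ (N + 1) = -(a' ^ (N + 1 + m + 1) * c (-((m : ℤ) + 1) * n)) := by
      intro m
      induction m with
      | zero =>
        have h0 := key 0
        rw [if_pos rfl, zero_sub] at h0
        have : a' ^ (N + 1) * c 0 = a' ^ (N + 1) * 1 + a' ^ (N + 1) * (a' * c (-n)) := by
          rw [← mul_add, ← h0]
        rw [hz, mul_one] at this
        have h2 : a' ^ (N + 1) = -(a' ^ (N + 1) * (a' * c (-n))) :=
          eq_neg_of_add_eq_zero_left this.symm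
        have e1 : -(((0 : ℕ) : ℤ) + 1) * n = -n := by push_cast; ring
        rw [e1]
        simp only [Nat.add_zero]
        rw [h2, ← mul_assoc, ← pow_succ]
      | succ m ih =>
        have hk : -((m : ℤ) + 1) * n ≠ 0 := by
          intro h
          rcases mul_eq_zero.mp h with h | h
          · omega
          · exact hn h
        have hkey := key (-((m : ℤ) + 1) * n)
        rw [if_neg hk, zero_add,
          show -((m : ℤ) + 1) * n - n = -((m : ℤ) + 1 + 1) * n by ring] at hkey
        rw [ih, hkey]
        rw [show ((m + 1 : ℕ) : ℤ) = (m : ℤ) + 1 by push_cast; ring]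
        rw [← mul_assoc, ← pow_succ, show N + 1 + (m + 1) + 1 = N + 1 + m + 1 + 1 by omega]
    have hfin : c (-(((N : ℤ)) + 1) * n) = 0 := by
      apply hsupp
      rw [Int.natAbs_mul]
      have : (-(((N : ℤ)) + 1)).natAbs = N + 1 := by omega
      rw [this]
      nlinarith
    have : a' ^ (N + 1) = 0 := by
      rw [claim2 N, hfin, mul_zero, neg_zero]
    have hnil' : IsNilpotent a' := ⟨N + 1, this⟩
    have := hnil'.neg
    rwa [ha'def, neg_neg] at this
  · intro h
    exact h.isUnit_one_add
end

section
/- Let R = ⊕_{n∈ℕ} R_n be an ℕ-graded ring and let a ∈ R_n be a homogeneous element of positive degree n > 0 lying in the Jacobson radical J(R). Then a is nilpotent. -/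
set_option maxHeartbeats 1000000

/-- The Jacobson radical of a ring `R`. -/
noncomputable def jacobsonRadical (R : Type*) [Ring R] : TwoSidedIdeal R :=
  (⊥ : TwoSidedIdeal R).jacobson

/-- If `R = ⊕_{n ∈ ℕ} R_n` is an `ℕ`-graded ring and `a ∈ R_n` is a homogeneous element of
positive degree `n > 0` lying in the Jacobson radical `J(R)`, then `a` is nilpotent. -/
theorem isNilpotent_of_homogeneous_mem_jacobson
    {R σ : Type*} [Ring R] [SetLike σ R] [AddSubgroupClass σ R]
    (𝒜 : ℕ → σ) [GradedRing 𝒜]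
    (n : ℕ) (hn : 0 < n) (a : R) (ha : a ∈ 𝒜 n)
    (haJ : a ∈ jacobsonRadical R) :
    IsNilpotent a := by
  classical
  -- a ∈ Ideal.jacobson ⊥
  have haI : a ∈ (⊥ : Ideal R).jacobson := by
    have h0 := (TwoSidedIdeal.asIdeal_jacobson (⊥ : TwoSidedIdeal R))
    have h₁ : a ∈ TwoSidedIdeal.asIdeal ((⊥ : TwoSidedIdeal R).jacobson) := haJ
    rw [h0] at h₁
    have hb : TwoSidedIdeal.asIdeal (⊥ : TwoSidedIdeal R) = ⊥ := by
      ext x; simp [TwoSidedIdeal.mem_asIdeal]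
    rwa [hb] at h₁
  -- a left inverse of 1 - a
  obtain ⟨u, hz⟩ := Ideal.mem_jacobson_iff.1 haI (-1)
  have h0 : u * (-1) * a + u - 1 = 0 := (Submodule.mem_bot R).mp hz
  have key : u = 1 + u * a := by
    have h1 : u - u * a - 1 = 0 := by rw [← h0]; noncomm_ring
    have h2 : u - u * a = 1 := by rwa [sub_eq_zero] at h1
    exact eq_add_of_sub_eq h2
  -- components: (decompose u (m*n) : R) = a ^ m
  have comp : ∀ m : ℕ, (DirectSum.decompose 𝒜 u (m * n) : R) = a ^ m := by
    intro m
    induction m with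
    | zero =>
      have h1 : (DirectSum.decompose 𝒜 u 0 : R)
          = (DirectSum.decompose 𝒜 (1 : R) 0 : R) + (DirectSum.decompose 𝒜 (u * a) 0 : R) := by
        conv_lhs => rw [key]
        rw [DirectSum.decompose_add]
        simp
      have h2 : (DirectSum.decompose 𝒜 (u * a) 0 : R) = 0 :=
        DirectSum.coe_decompose_mul_of_right_mem_of_not_le 𝒜 ha (by omega)
      have h3 : (DirectSum.decompose 𝒜 (1 : R) 0 : R) = 1 :=
        DirectSum.decompose_of_mem_same 𝒜 (SetLike.one_mem_graded 𝒜)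
      rw [Nat.zero_mul, h1, h2, h3, pow_zero, add_zero]
    | succ m ih =>
      have h1 : (DirectSum.decompose 𝒜 u ((m + 1) * n) : R)
          = (DirectSum.decompose 𝒜 (1 : R) ((m + 1) * n) : R)
            + (DirectSum.decompose 𝒜 (u * a) ((m + 1) * n) : R) := by
        conv_lhs => rw [key]
        rw [DirectSum.decompose_add]
        simp
      have h2 : (DirectSum.decompose 𝒜 (u * a) ((m + 1) * n) : R)
          = (DirectSum.decompose 𝒜 u ((m + 1) * n - n) : R) * a :=
        DirectSum.coe_decompose_mul_of_right_mem_of_le 𝒜 ha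
          (Nat.le_mul_of_pos_left n (Nat.succ_pos m))
      have h3 : (DirectSum.decompose 𝒜 (1 : R) ((m + 1) * n) : R) = 0 := by
        rw [DirectSum.decompose_of_mem_ne 𝒜 (SetLike.one_mem_graded 𝒜)
          (Nat.mul_pos (Nat.succ_pos m) hn).ne]
      have h4 : (m + 1) * n - n = m * n := by
        rw [add_mul, one_mul, Nat.add_sub_cancel]
      rw [h1, h2, h3, h4, ih, zero_add, ← pow_succ]
  -- finiteness of support
  obtain ⟨m, hm⟩ : ∃ m : ℕ, DirectSum.decompose 𝒜 u (m * n) = 0 := by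
    set s := (DirectSum.decompose 𝒜 u).support with hs
    refine ⟨s.sup id + 1, ?_⟩
    by_contra h
    have hmem : (s.sup id + 1) * n ∈ s := DFinsupp.mem_support_iff.2 h
    have hle := Finset.le_sup (f := id) hmem
    simp only [id] at hle
    have hge : s.sup id + 1 ≤ (s.sup id + 1) * n :=
      Nat.le_mul_of_pos_right _ hn
    omega
  exact ⟨m, by rw [← comp m, hm, ZeroMemClass.coe_zero]⟩
end

section
/- Let Ω be a set of words in the free monoid 𝔅 on a finite alphabet X, and let u be a normal word (no element of Ω divides u). If there exists a word v such that (uv)^q is normal for all q ∈ ℕ, then the residue class of u in R = K⟨X⟩/⟨Ω⟩ does not lie in the upper nilradical of R. -/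
open scoped Classical

/-- Words in the letters `X_1, …, X_n`: the free monoid on `Fin n`. -/
abbrev Word (n : ℕ) := FreeMonoid (Fin n)

/-- The free associative `K`-algebra `K⟨X_1,…,X_n⟩`, realised as the monoid algebra of the
free monoid on `Fin n`. -/
abbrev FreeAlg (K : Type) [Field K] (n : ℕ) := MonoidAlgebra K (Word n)

/-- The word `v` divides the word `u` if `u = w * v * s` for some words `w, s`. -/
def WDvd {n : ℕ} (v u : Word n) : Prop := ∃ w s : Word n, u = w * v * s

/-- The monomial of `K⟨X⟩` corresponding to a word. -/
noncomputable def mono {K : Type} [Field K] {n : ℕ} (w : Word n) : FreeAlg K n :=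
  MonoidAlgebra.single w 1

/-- The two-sided ideal of `K⟨X⟩` generated by a set of words (a monomial ideal). -/
noncomputable def monIdeal (K : Type) [Field K] {n : ℕ} (Ω : Set (Word n)) :
    TwoSidedIdeal (FreeAlg K n) :=
  TwoSidedIdeal.span (mono '' Ω)

/-- A ring is semiprime if `a R a = 0` implies `a = 0`. -/
def IsSemiprimeRing (R : Type*) [Ring R] : Prop :=
  ∀ a : R, (∀ r : R, a * r * a = 0) → a = 0

/-- A ring is semiprimitive (Jacobson semisimple) if its Jacobson radical is zero. -/
def IsSemiprimitiveRing (R : Type*) [Ring R] : Prop :=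
  (⊥ : TwoSidedIdeal R).jacobson = ⊥

/-- A monomial ordering on the words: a multiplication-compatible well-ordering. -/
structure MonOrder (n : ℕ) where
  /-- the strict order relation -/
  lt : Word n → Word n → Prop
  trichotomous : ∀ u v : Word n, lt u v ∨ u = v ∨ lt v u
  trans : ∀ {u v w : Word n}, lt u v → lt v w → lt u w
  wf : WellFounded lt
  mul_compat : ∀ u v w s : Word n, lt u v → lt (w * u * s) (w * v * s)
  one_lt : ∀ u w s : Word n, w * u * s ≠ u → lt u (w * u * s)

/-- The leading monomial (word) of a nonzero element of `K⟨X⟩` with respect to a monomial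
ordering: the `≺`-largest word in its support (and `1` by convention for `0`). -/
noncomputable def LM {K : Type} [Field K] {n : ℕ} (o : MonOrder n) (f : FreeAlg K n) :
    Word n :=
  if h : ∃ w ∈ f.coeff.support, ∀ v ∈ f.coeff.support, v ≠ w → o.lt v w then h.choose else 1

/-- The weight degree of a word, where the letter `i` has weight `wt i`. -/
def wdeg {n : ℕ} (wt : Fin n → ℕ) (u : Word n) : ℕ :=
  (FreeMonoid.toList u |>.map wt).sum

/-- `f` is homogeneous of degree `p` with respect to the weight grading. -/
def IsHomogeneous {K : Type} [Field K] {n : ℕ} (wt : Fin n → ℕ) (f : FreeAlg K n)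
    (p : ℕ) : Prop :=
  ∀ w ∈ f.coeff.support, wdeg wt w = p

/-- The (highest-degree) leading homogeneous component of `f` with respect to the weight
grading. -/
noncomputable def LH {K : Type} [Field K] {n : ℕ} (wt : Fin n → ℕ) (f : FreeAlg K n) :
    FreeAlg K n :=
  MonoidAlgebra.ofCoeff (Finsupp.filter (fun w => wdeg wt w = f.coeff.support.sup (wdeg wt)) f.coeff)

/-- `𝒢` is a Gröbner basis of the two-sided ideal `I` w.r.t. the monomial ordering `o`:
`𝒢 ⊆ I ∖ {0}` and the leading monomials of `I` and of `𝒢` generate the same monomial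
ideal. -/
def IsGrobnerBasis {K : Type} [Field K] {n : ℕ} (o : MonOrder n)
    (𝒢 : Set (FreeAlg K n)) (I : TwoSidedIdeal (FreeAlg K n)) : Prop :=
  𝒢 ⊆ {f | f ∈ I ∧ f ≠ 0} ∧
    monIdeal K (LM o '' {f : FreeAlg K n | f ∈ I ∧ f ≠ 0}) = monIdeal K (LM o '' 𝒢)

/-- The upper nilradical of a ring: the sum (supremum) of all nil two-sided ideals. -/
noncomputable def upperNilradical (R : Type*) [Ring R] : TwoSidedIdeal R :=
  sSup {I : TwoSidedIdeal R | ∀ x ∈ I, IsNilpotent x}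

lemma mk'_eq_zero_iff {R : Type*} [Ring R] (I : TwoSidedIdeal R) (x : R) :
    RingCon.mk' I.ringCon x = 0 ↔ x ∈ I := by
  rw [TwoSidedIdeal.mem_iff]
  show (x : I.ringCon.Quotient) = ((0 : R) : I.ringCon.Quotient) ↔ _
  exact RingCon.eq I.ringCon

lemma mono_mem_monIdeal {K : Type} [Field K] {n : ℕ} (Ω : Set (Word n)) (w : Word n)
    (h : mono (K := K) w ∈ monIdeal K Ω) : ∃ ω ∈ Ω, WDvd ω w := by
  set S : Set (FreeAlg K n) := {f | ∀ w ∈ f.coeff.support, ∃ ω ∈ Ω, WDvd ω w} with hS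
  have hmul : ∀ {x y : FreeAlg K n}, (x ∈ S ∨ y ∈ S) → x * y ∈ S := by
    rintro x y hxy v hv
    have := MonoidAlgebra.support_coeff_mul_subset x y hv
    rw [Finset.mem_mul] at this
    obtain ⟨a, ha, b, hb, rfl⟩ := this
    rcases hxy with hx | hy
    · obtain ⟨ω, hω, w', s, rfl⟩ := hx a ha
      exact ⟨ω, hω, w', s * b, by simp [mul_assoc]⟩
    · obtain ⟨ω, hω, w', s, rfl⟩ := hy b hb
      exact ⟨ω, hω, a * w', s, by simp [mul_assoc]⟩
  let J : TwoSidedIdeal (FreeAlg K n) := TwoSidedIdeal.mk' S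
    (by intro w hw; simp at hw)
    (by intro x y hx hy v hv
        rcases Finset.mem_union.mp (Finsupp.support_add hv) with h | h
        exacts [hx v h, hy v h])
    (by intro x hx v hv; rw [MonoidAlgebra.coeff_neg, Finsupp.support_neg] at hv; exact hx v hv)
    (fun {x y} hy => hmul (Or.inr hy))
    (fun {x y} hx => hmul (Or.inl hx))
  have hsub : mono (K := K) '' Ω ⊆ (J : Set (FreeAlg K n)) := by
    rintro _ ⟨ω, hω, rfl⟩
    rw [SetLike.mem_coe, TwoSidedIdeal.mem_mk']
    intro v hv
    rw [mono, MonoidAlgebra.coeff_single, Finsupp.support_single_ne_zero _ one_ne_zero, Finset.mem_singleton] at hv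
    exact ⟨ω, hω, 1, 1, by rw [hv, one_mul, mul_one]⟩
  have hJ : mono (K := K) w ∈ J := TwoSidedIdeal.mem_span_iff.mp h J hsub
  rw [TwoSidedIdeal.mem_mk'] at hJ
  exact hJ w (by rw [mono, MonoidAlgebra.coeff_single, Finsupp.support_single_ne_zero _ one_ne_zero]; simp)

lemma sup_nil {R : Type*} [Ring R] {I J : TwoSidedIdeal R}
    (hI : ∀ x ∈ I, IsNilpotent x) (hJ : ∀ x ∈ J, IsNilpotent x) :
    ∀ x ∈ I ⊔ J, IsNilpotent x := by
  intro x hx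
  obtain ⟨a, ha, b, hb, rfl⟩ := TwoSidedIdeal.mem_sup.mp hx
  obtain ⟨k, hk⟩ := hJ b hb
  have h1 : RingCon.mk' I.ringCon ((a + b) ^ k) = 0 := by
    rw [map_pow, map_add, (mk'_eq_zero_iff I a).mpr ha, zero_add, ← map_pow, hk, map_zero]
  obtain ⟨m, hm⟩ := hI _ ((mk'_eq_zero_iff I ((a + b) ^ k)).mp h1)
  exact ⟨k * m, by rw [pow_mul, hm]⟩

lemma mem_upperNilradical_nilIdeal {R : Type*} [Ring R] {x : R}
    (hx : x ∈ upperNilradical R) :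
    ∃ I : TwoSidedIdeal R, (∀ y ∈ I, IsNilpotent y) ∧ x ∈ I := by
  set U : Set R := {x | ∃ I : TwoSidedIdeal R, (∀ y ∈ I, IsNilpotent y) ∧ x ∈ I} with hU
  let N : TwoSidedIdeal R := TwoSidedIdeal.mk' U
    ⟨⊥, by intro y hy; rw [TwoSidedIdeal.mem_bot] at hy; simp [hy], TwoSidedIdeal.zero_mem _⟩
    (by rintro x y ⟨I, hI, hxI⟩ ⟨J, hJ, hyJ⟩
        exact ⟨I ⊔ J, sup_nil hI hJ,
          TwoSidedIdeal.add_mem _ (TwoSidedIdeal.mem_sup_left hxI)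
            (TwoSidedIdeal.mem_sup_right hyJ)⟩)
    (by rintro x ⟨I, hI, hxI⟩; exact ⟨I, hI, TwoSidedIdeal.neg_mem _ hxI⟩)
    (by rintro x y ⟨I, hI, hyI⟩; exact ⟨I, hI, TwoSidedIdeal.mul_mem_left _ _ _ hyI⟩)
    (by rintro x y ⟨I, hI, hxI⟩; exact ⟨I, hI, TwoSidedIdeal.mul_mem_right _ _ _ hxI⟩)
  have hle : upperNilradical R ≤ N := by
    apply sSup_le
    intro I hI y hy
    rw [TwoSidedIdeal.mem_mk']
    exact ⟨I, hI, hy⟩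
  have := hle hx
  rwa [TwoSidedIdeal.mem_mk'] at this

/-- Let `Ω` be a set of words and `u` a normal word (no element of `Ω` divides `u`).  If
there is a word `v` such that `(uv)^q` is normal for all `q ∈ ℕ`, then the residue class
of `u` in `R = K⟨X⟩/⟨Ω⟩` does not lie in the upper nilradical of `R`. -/
theorem cyclic_normal_word_not_mem_upperNilradical {K : Type} [Field K] {n : ℕ}
    (Ω : Set (Word n)) (u : Word n)
    (hu : ¬ ∃ ω ∈ Ω, WDvd ω u)
    (hcyc : ∃ v : Word n, ∀ q : ℕ, ¬ ∃ ω ∈ Ω, WDvd ω ((u * v) ^ q)) :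
    RingCon.mk' (monIdeal K Ω).ringCon (mono u) ∉
      upperNilradical (monIdeal K Ω).ringCon.Quotient := by
  obtain ⟨v, hv⟩ := hcyc
  intro hmem
  obtain ⟨I, hInil, huI⟩ := mem_upperNilradical_nilIdeal hmem
  set π := RingCon.mk' (monIdeal K Ω).ringCon
  have huv : π (mono (u * v)) ∈ I := by
    have : π (mono u) * π (mono v) ∈ I := TwoSidedIdeal.mul_mem_right _ _ _ huI
    rwa [← map_mul, show mono (K := K) u * mono v = mono (u * v) by
      simp [mono, MonoidAlgebra.single_mul_single]] at this
  obtain ⟨q, hq⟩ := hInil _ huv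
  rw [← map_pow] at hq
  have hpow : (mono (K := K) (u * v)) ^ q = mono ((u * v) ^ q) := by
    simp [mono, MonoidAlgebra.single_pow]
  rw [hpow] at hq
  exact hv q (mono_mem_monIdeal Ω _ ((mk'_eq_zero_iff _ _).mp hq))
end

section
/- Let K⟨X⟩ have a weight ℕ-grading with grading filtration F_p K⟨X⟩ = ⊕_{q≤p} K⟨X⟩_q, let ≺_gr be an ℕ-graded monomial ordering, and let 𝒢 be a finite Gröbner basis of I = ⟨𝒢⟩ with respect to ≺_gr. Then LH(𝒢) = {LH(g) : g ∈ 𝒢} is a Gröbner basis of the graded ideal ⟨LH(𝒢)⟩, where LH(g) denotes the leading (highest-degree) homogeneous component of g, and LM(LH(g)) = LM(g) for each g ∈ 𝒢. -/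
open scoped Classical

section Aux
variable {K : Type} [Field K] {n : ℕ}

lemma MonOrder.asymm (o : MonOrder n) {u v : Word n} (h : o.lt u v) : ¬ o.lt v u :=
  o.wf.asymmetric u v h

lemma exists_max (o : MonOrder n) (s : Finset (Word n)) (hs : s.Nonempty) :
    ∃ w ∈ s, ∀ v ∈ s, v ≠ w → o.lt v w := by
  classical
  induction s using Finset.induction with
  | empty => exact absurd hs (by simp)
  | @insert a s ha ih =>
    rcases s.eq_empty_or_nonempty with rfl | hne
    · exact ⟨a, by simp, by simp⟩
    · obtain ⟨w, hw, hmax⟩ := ih hne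
      rcases o.trichotomous a w with h | rfl | h
      · refine ⟨w, Finset.mem_insert_of_mem hw, ?_⟩
        intro v hv hne'
        rcases Finset.mem_insert.mp hv with rfl | hv
        · exact h
        · exact hmax v hv hne'
      · exact absurd hw ha
      · refine ⟨a, Finset.mem_insert_self a _, ?_⟩
        intro v hv hne'
        rcases Finset.mem_insert.mp hv with rfl | hv
        · exact absurd rfl hne'
        · rcases o.trichotomous v w with h' | rfl | h'
          · exact o.trans h' h
          · exact h
          · exact absurd h' (o.asymm (hmax v hv (by rintro rfl; exact o.asymm h' h')))

lemma LM_spec (o : MonOrder n) {f : FreeAlg K n} (hf : f ≠ 0) :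
    LM o f ∈ f.coeff.support ∧ ∀ v ∈ f.coeff.support, v ≠ LM o f → o.lt v (LM o f) := by
  have h : ∃ w ∈ f.coeff.support, ∀ v ∈ f.coeff.support, v ≠ w → o.lt v w :=
    exists_max o _ (Finsupp.support_nonempty_iff.mpr (fun h => hf (MonoidAlgebra.ext h)))
  rw [LM, dif_pos h]
  exact ⟨h.choose_spec.1, h.choose_spec.2⟩

lemma LM_unique (o : MonOrder n) {f : FreeAlg K n} (hf : f ≠ 0) {w : Word n}
    (hw : w ∈ f.coeff.support) (hmax : ∀ v ∈ f.coeff.support, v ≠ w → o.lt v w) : LM o f = w := by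
  obtain ⟨h1, h2⟩ := LM_spec o hf
  by_contra hne
  exact o.asymm (hmax _ h1 hne) (h2 _ hw (Ne.symm hne))

lemma wdeg_mul (wt : Fin n → ℕ) (u v : Word n) :
    wdeg wt (u * v) = wdeg wt u + wdeg wt v := by
  simp [wdeg, FreeMonoid.toList_mul]


/-- degree of an element -/
noncomputable def deg (wt : Fin n → ℕ) (f : FreeAlg K n) : ℕ := f.coeff.support.sup (wdeg wt)

/-- homogeneous component of degree p -/
noncomputable def hc (wt : Fin n → ℕ) (p : ℕ) (f : FreeAlg K n) : FreeAlg K n :=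
  MonoidAlgebra.ofCoeff (Finsupp.filter (fun w => wdeg wt w = p) f.coeff)

lemma hc_add (wt : Fin n → ℕ) (p : ℕ) (f g : FreeAlg K n) :
    hc wt p (f + g) = hc wt p f + hc wt p g := by
  exact congrArg MonoidAlgebra.ofCoeff Finsupp.filter_add

lemma hc_neg (wt : Fin n → ℕ) (p : ℕ) (f : FreeAlg K n) :
    hc wt p (-f) = - hc wt p f := by
  exact congrArg MonoidAlgebra.ofCoeff (Finsupp.filter_neg _ f.coeff)

lemma hc_zero (wt : Fin n → ℕ) (p : ℕ) : hc wt p (0 : FreeAlg K n) = 0 := by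
  ext w; simp [hc, Finsupp.filter_apply]

lemma hc_eq_self (wt : Fin n → ℕ) {p : ℕ} {f : FreeAlg K n}
    (h : ∀ w ∈ f.coeff.support, wdeg wt w = p) : hc wt p f = f := by
  ext w
  rw [hc, MonoidAlgebra.coeff_ofCoeff, Finsupp.filter_apply]
  by_cases hw : w ∈ f.coeff.support
  · rw [if_pos (h w hw)]
  · simp only [Finsupp.notMem_support_iff] at hw
    rw [hw]; split <;> rfl

lemma hc_eq_zero (wt : Fin n → ℕ) {p : ℕ} {f : FreeAlg K n}
    (h : ∀ w ∈ f.coeff.support, wdeg wt w ≠ p) : hc wt p f = 0 := by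
  ext w
  rw [hc, MonoidAlgebra.coeff_ofCoeff, Finsupp.filter_apply]
  by_cases hw : w ∈ f.coeff.support
  · rw [if_neg (h w hw)]; rfl
  · simp only [Finsupp.notMem_support_iff] at hw
    rw [hw]; split <;> rfl

lemma hc_support (wt : Fin n → ℕ) (p : ℕ) (f : FreeAlg K n) :
    (hc wt p f).coeff.support = f.coeff.support.filter (fun w => wdeg wt w = p) := by
  classical
  simp [hc, Finsupp.support_filter]

lemma LH_eq_hc (wt : Fin n → ℕ) (f : FreeAlg K n) : LH wt f = hc wt (deg wt f) f := rfl

lemma wdeg_le_deg (wt : Fin n → ℕ) {f : FreeAlg K n} {w : Word n} (hw : w ∈ f.coeff.support) :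
    wdeg wt w ≤ deg wt f := Finset.le_sup hw

/-- leading monomial has maximal degree -/
lemma wdeg_LM (wt : Fin n → ℕ) (o : MonOrder n)
    (hgr : ∀ u v : Word n, wdeg wt u < wdeg wt v → o.lt u v)
    {f : FreeAlg K n} (hf : f ≠ 0) : wdeg wt (LM o f) = deg wt f := by
  obtain ⟨h1, h2⟩ := LM_spec o hf
  obtain ⟨u, hu, hud⟩ := Finset.exists_mem_eq_sup f.coeff.support
    (Finsupp.support_nonempty_iff.mpr (fun h => hf (MonoidAlgebra.ext h))) (wdeg wt)
  refine le_antisymm (wdeg_le_deg wt h1) ?_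
  rw [deg, hud]
  by_contra hlt
  push_neg at hlt
  have hne : u ≠ LM o f := by
    rintro rfl; exact absurd rfl (ne_of_gt hlt)
  exact o.asymm (h2 u hu hne) (hgr _ _ hlt)

lemma LM_mem_LH (wt : Fin n → ℕ) (o : MonOrder n)
    (hgr : ∀ u v : Word n, wdeg wt u < wdeg wt v → o.lt u v)
    {f : FreeAlg K n} (hf : f ≠ 0) : LM o f ∈ (LH wt f).coeff.support := by
  rw [LH_eq_hc, hc_support, Finset.mem_filter]
  exact ⟨(LM_spec o hf).1, wdeg_LM wt o hgr hf⟩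

lemma LH_ne_zero (wt : Fin n → ℕ) (o : MonOrder n)
    (hgr : ∀ u v : Word n, wdeg wt u < wdeg wt v → o.lt u v)
    {f : FreeAlg K n} (hf : f ≠ 0) : LH wt f ≠ 0 := by
  intro h
  have := LM_mem_LH wt o hgr hf
  rw [h] at this; simp at this

lemma LM_LH (wt : Fin n → ℕ) (o : MonOrder n)
    (hgr : ∀ u v : Word n, wdeg wt u < wdeg wt v → o.lt u v)
    {f : FreeAlg K n} (hf : f ≠ 0) : LM o (LH wt f) = LM o f := by
  refine LM_unique o (LH_ne_zero wt o hgr hf) (LM_mem_LH wt o hgr hf) ?_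
  intro v hv hne
  rw [LH_eq_hc, hc_support, Finset.mem_filter] at hv
  exact (LM_spec o hf).2 v hv.1 hne


lemma support_sandwich {u v : Word n} {c d : K} (s : FreeAlg K n) :
    ∀ w' ∈ (MonoidAlgebra.single u c * s * MonoidAlgebra.single v d).coeff.support,
      ∃ w ∈ s.coeff.support, w' = u * w * v := by
  classical
  intro w' hw'
  have h1 := MonoidAlgebra.support_coeff_mul_subset (MonoidAlgebra.single u c * s) (MonoidAlgebra.single v d) hw'
  rw [Finset.mem_mul] at h1
  obtain ⟨y, hy, z, hz, hyz⟩ := h1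
  have h2 := MonoidAlgebra.support_coeff_mul_subset (MonoidAlgebra.single u c) s hy
  rw [Finset.mem_mul] at h2
  obtain ⟨y1, hy1, y2, hy2, hy12⟩ := h2
  have hu : y1 = u := Finset.mem_singleton.mp (Finsupp.support_single_subset hy1)
  have hv : z = v := Finset.mem_singleton.mp (Finsupp.support_single_subset hz)
  exact ⟨y2, hy2, by rw [← hyz, ← hy12, hu, hv]⟩

lemma wdeg_LH_support (wt : Fin n → ℕ) {g : FreeAlg K n} :
    ∀ w ∈ (LH wt g).coeff.support, wdeg wt w = deg wt g := by
  intro w hw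
  rw [LH_eq_hc, hc_support, Finset.mem_filter] at hw
  exact hw.2

lemma wdeg_tail_support (wt : Fin n → ℕ) {g : FreeAlg K n} :
    ∀ w ∈ (g - LH wt g).coeff.support, wdeg wt w < deg wt g := by
  classical
  intro w hw
  rw [Finsupp.mem_support_iff] at hw
  have happ : (g - LH wt g).coeff w = g.coeff w - (LH wt g).coeff w := rfl
  rw [happ, LH_eq_hc, hc, MonoidAlgebra.coeff_ofCoeff, Finsupp.filter_apply] at hw
  by_cases hd : wdeg wt w = deg wt g
  · rw [if_pos hd] at hw; simp at hw
  · rw [if_neg hd] at hw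
    have hme : w ∈ g.coeff.support := by
      rw [Finsupp.mem_support_iff]; intro h0; rw [h0] at hw; simp at hw
    exact lt_of_le_of_ne (wdeg_le_deg wt hme) hd

/-- The key lemma: every element of the span of `LH '' 𝒢` agrees, in each degree `p`,
with some element of `I` of degree at most `p`. -/
lemma key_lemma (wt : Fin n → ℕ) (𝒢 : Set (FreeAlg K n)) (I : TwoSidedIdeal (FreeAlg K n))
    (hGI : ∀ g ∈ 𝒢, g ∈ I) {f : FreeAlg K n}
    (hf : f ∈ TwoSidedIdeal.span (LH wt '' 𝒢)) (p : ℕ) :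
    ∃ f', f' ∈ I ∧ hc wt p f' = hc wt p f ∧ ∀ w ∈ f'.coeff.support, wdeg wt w ≤ p := by
  classical
  set P : FreeAlg K n → Prop :=
    fun f => ∃ f', f' ∈ I ∧ hc wt p f' = hc wt p f ∧ ∀ w ∈ f'.coeff.support, wdeg wt w ≤ p with hP
  suffices h : P f by exact h
  have Pzero : P 0 := ⟨0, I.zero_mem, by rw [hc_zero], by simp⟩
  have Padd : ∀ x y, P x → P y → P (x + y) := by
    rintro x y ⟨x', hx1, hx2, hx3⟩ ⟨y', hy1, hy2, hy3⟩
    refine ⟨x' + y', I.add_mem hx1 hy1, by rw [hc_add, hc_add, hx2, hy2], ?_⟩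
    intro w hw
    rcases Finset.mem_union.mp (Finsupp.support_add hw) with h | h
    · exact hx3 w h
    · exact hy3 w h
  have Pneg : ∀ x, P x → P (-x) := by
    rintro x ⟨x', hx1, hx2, hx3⟩
    refine ⟨-x', I.neg_mem hx1, by rw [hc_neg, hc_neg, hx2], ?_⟩
    intro w hw
    rw [MonoidAlgebra.coeff_neg, Finsupp.support_neg] at hw
    exact hx3 w hw
  -- the generator case for monomial coefficients
  have Pmono : ∀ (g : FreeAlg K n), g ∈ 𝒢 → ∀ (u v : Word n) (c d : K),
      P (MonoidAlgebra.single u c * LH wt g * MonoidAlgebra.single v d) := by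
    intro g hg u v c d
    have hsupp : ∀ w' ∈ (MonoidAlgebra.single u c * LH wt g *
        MonoidAlgebra.single v d).coeff.support,
        wdeg wt w' = wdeg wt u + deg wt g + wdeg wt v := by
      intro w' hw'
      obtain ⟨w, hw, rfl⟩ := support_sandwich (LH wt g) w' hw'
      rw [wdeg_mul, wdeg_mul, wdeg_LH_support wt w hw]
    by_cases hpm : p = wdeg wt u + deg wt g + wdeg wt v
    · have htail : hc wt p (MonoidAlgebra.single u c * (g - LH wt g) *
          MonoidAlgebra.single v d) = 0 := by
        apply hc_eq_zero
        intro w' hw'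
        obtain ⟨w, hw, rfl⟩ := support_sandwich (g - LH wt g) w' hw'
        rw [wdeg_mul, wdeg_mul]
        have := wdeg_tail_support wt w hw
        omega
      have hsplit : MonoidAlgebra.single u c * g * MonoidAlgebra.single v d =
          MonoidAlgebra.single u c * LH wt g * MonoidAlgebra.single v d +
          MonoidAlgebra.single u c * (g - LH wt g) * MonoidAlgebra.single v d := by
        rw [← add_mul, ← mul_add]
        congr 2
        abel
      refine ⟨MonoidAlgebra.single u c * g * MonoidAlgebra.single v d,
        I.mul_mem_right _ _ (I.mul_mem_left _ _ (hGI g hg)), ?_, ?_⟩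
      · rw [hsplit, hc_add, htail, add_zero]
      · intro w' hw'
        have h1 := MonoidAlgebra.support_coeff_mul_subset (MonoidAlgebra.single u c * g)
          (MonoidAlgebra.single v d) hw'
        rw [Finset.mem_mul] at h1
        obtain ⟨y, hy, z, hz, hyz⟩ := h1
        have h2 := MonoidAlgebra.support_coeff_mul_subset (MonoidAlgebra.single u c) g hy
        rw [Finset.mem_mul] at h2
        obtain ⟨y1, hy1, y2, hy2, hy12⟩ := h2
        have hu : y1 = u := Finset.mem_singleton.mp (Finsupp.support_single_subset hy1)
        have hv : z = v := Finset.mem_singleton.mp (Finsupp.support_single_subset hz)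
        have hw' : w' = u * y2 * v := by rw [← hyz, ← hy12, hu, hv]
        subst hw'
        rw [wdeg_mul, wdeg_mul]
        have := wdeg_le_deg wt hy2
        omega
    · refine ⟨0, I.zero_mem, ?_, by simp⟩
      rw [hc_zero]
      symm
      apply hc_eq_zero
      intro w' hw'
      rw [hsupp w' hw']
      omega
  -- generator case for arbitrary coefficients
  have Pgen : ∀ (g : FreeAlg K n), g ∈ 𝒢 → ∀ (a b : FreeAlg K n), P (a * LH wt g * b) := by
    intro g hg a b
    have hmid : ∀ (u : Word n) (c : K), P (MonoidAlgebra.single u c * LH wt g * b) := by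
      intro u c
      have h2 : MonoidAlgebra.single u c * LH wt g * b =
          b.coeff.sum fun v d => MonoidAlgebra.single u c * LH wt g * MonoidAlgebra.single v d := by
        conv_lhs => rw [← MonoidAlgebra.sum_coeff_single b]
        rw [Finsupp.mul_sum]
      rw [h2, Finsupp.sum]
      exact Finset.sum_induction _ P Padd Pzero fun v hv => Pmono g hg u v c (b.coeff v)
    have h1 : a * LH wt g * b =
        a.coeff.sum fun u c => MonoidAlgebra.single u c * LH wt g * b := by
      conv_lhs => rw [← MonoidAlgebra.sum_coeff_single a]
      rw [Finsupp.sum_mul, Finsupp.sum_mul]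
    rw [h1, Finsupp.sum]
    exact Finset.sum_induction _ P Padd Pzero fun u hu => hmid u (a.coeff u)
  rw [TwoSidedIdeal.mem_span_iff_mem_addSubgroup_closure] at hf
  refine AddSubgroup.closure_induction ?_ Pzero (fun x y _ _ hx hy => Padd x y hx hy)
    (fun x _ hx => Pneg x hx) hf
  intro x hx
  rw [Set.mem_mul] at hx
  obtain ⟨y, hy, z, _, rfl⟩ := hx
  rw [Set.mem_mul] at hy
  obtain ⟨a, _, s, hs, rfl⟩ := hy
  obtain ⟨g, hg, rfl⟩ := hs
  exact Pgen g hg a z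


lemma exists_in_I (wt : Fin n → ℕ) (o : MonOrder n)
    (hgr : ∀ u v : Word n, wdeg wt u < wdeg wt v → o.lt u v)
    (𝒢 : Set (FreeAlg K n)) (I : TwoSidedIdeal (FreeAlg K n))
    (hGI : ∀ g ∈ 𝒢, g ∈ I) {f : FreeAlg K n}
    (hf : f ∈ TwoSidedIdeal.span (LH wt '' 𝒢)) (hf0 : f ≠ 0) :
    ∃ f', f' ∈ I ∧ f' ≠ 0 ∧ LM o f' = LM o f := by
  classical
  obtain ⟨f', hfI, hfc, hfd⟩ := key_lemma wt 𝒢 I hGI hf (deg wt f)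
  have hLH : hc wt (deg wt f) f = LH wt f := rfl
  rw [hLH] at hfc
  have hLHne : LH wt f ≠ 0 := LH_ne_zero wt o hgr hf0
  have hf'0 : f' ≠ 0 := by
    rintro rfl
    rw [hc_zero] at hfc
    exact hLHne hfc.symm
  -- the support of `hc wt (deg wt f) f'` is contained in that of `f'`
  have hsub : (LH wt f).coeff.support ⊆ f'.coeff.support := by
    rw [← hfc, hc_support]
    exact Finset.filter_subset _ _
  have hdeg : deg wt f' = deg wt f := by
    refine le_antisymm (Finset.sup_le fun w hw => hfd w hw) ?_
    have hLM : LM o f ∈ (LH wt f).coeff.support := LM_mem_LH wt o hgr hf0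
    have := Finset.le_sup (f := wdeg wt) (hsub hLM)
    rwa [wdeg_LM wt o hgr hf0] at this
  have hLHf' : LH wt f' = LH wt f := by
    rw [LH_eq_hc, hdeg, hfc]
  have h1 := LM_LH wt o hgr hf'0
  rw [hLHf'] at h1
  exact ⟨f', hfI, hf'0, by rw [← h1, LM_LH wt o hgr hf0]⟩

lemma monIdeal_le {Ω₁ Ω₂ : Set (Word n)}
    (h : ∀ x ∈ Ω₁, mono (K := K) x ∈ monIdeal K Ω₂) : monIdeal K Ω₁ ≤ monIdeal K Ω₂ := by
  intro x hx
  rw [monIdeal, TwoSidedIdeal.mem_span_iff] at hx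
  refine hx (monIdeal K Ω₂) ?_
  rintro y ⟨w, hw, rfl⟩
  exact h w hw

lemma mono_mem_monIdeal_s8 {Ω : Set (Word n)} {x : Word n} (hx : x ∈ Ω) :
    mono (K := K) x ∈ monIdeal K Ω :=
  TwoSidedIdeal.subset_span ⟨x, hx, rfl⟩

end Aux

/-- Let `≺_gr` be an `ℕ`-graded monomial ordering (degree is compared first) for a weight
`ℕ`-grading of `K⟨X⟩`, and `𝒢` a finite Gröbner basis of `I = ⟨𝒢⟩` w.r.t. `≺_gr`.  Then
the set `LH(𝒢)` of leading homogeneous components of elements of `𝒢` is a Gröbner basis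
of the graded ideal `⟨LH(𝒢)⟩`, and `LM(LH(g)) = LM(g)` for every `g ∈ 𝒢`. -/
theorem LH_isGrobnerBasis {K : Type} [Field K] {n : ℕ}
    (wt : Fin n → ℕ) (hwt : ∀ i, 0 < wt i) (o : MonOrder n)
    (hgr : ∀ u v : Word n, wdeg wt u < wdeg wt v → o.lt u v)
    (𝒢 : Set (FreeAlg K n)) (hfin : 𝒢.Finite)
    (I : TwoSidedIdeal (FreeAlg K n)) (hI : I = TwoSidedIdeal.span 𝒢)
    (hGB : IsGrobnerBasis o 𝒢 I) :
    IsGrobnerBasis o (LH wt '' 𝒢) (TwoSidedIdeal.span (LH wt '' 𝒢)) ∧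
      ∀ g ∈ 𝒢, LM o (LH wt g) = LM o g := by
  classical
  have hGne : ∀ g ∈ 𝒢, g ≠ 0 := fun g hg => (hGB.1 hg).2
  have hGI : ∀ g ∈ 𝒢, g ∈ I := fun g hg => (hGB.1 hg).1
  have part2 : ∀ g ∈ 𝒢, LM o (LH wt g) = LM o g := fun g hg => LM_LH wt o hgr (hGne g hg)
  refine ⟨⟨?_, ?_⟩, part2⟩
  · rintro x ⟨g, hg, rfl⟩
    exact ⟨TwoSidedIdeal.subset_span ⟨g, hg, rfl⟩, LH_ne_zero wt o hgr (hGne g hg)⟩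
  · have himg : LM o '' (LH wt '' 𝒢) = LM o '' 𝒢 := by
      rw [← Set.image_comp]
      exact Set.image_congr fun g hg => part2 g hg
    refine le_antisymm ?_ ?_
    · refine monIdeal_le ?_
      rintro x ⟨f, ⟨hfJ, hf0⟩, rfl⟩
      obtain ⟨f', hfI, hf'0, hLM⟩ := exists_in_I wt o hgr 𝒢 I hGI hfJ hf0
      rw [← hLM, himg, ← hGB.2]
      exact mono_mem_monIdeal_s8 ⟨f', ⟨hfI, hf'0⟩, rfl⟩
    · refine monIdeal_le ?_
      rintro x ⟨h, ⟨g, hg, rfl⟩, rfl⟩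
      refine mono_mem_monIdeal_s8 ⟨LH wt g, ⟨?_, LH_ne_zero wt o hgr (hGne g hg)⟩, rfl⟩
      exact TwoSidedIdeal.subset_span ⟨g, hg, rfl⟩
end

section
/- Let I be a graded (homogeneous) two-sided ideal of the weight ℕ-graded free algebra K⟨X⟩, and let ≺ be a monomial ordering with Gröbner basis 𝒢 of I consisting of homogeneous elements. Then every nonzero homogeneous element H ∈ K⟨X⟩_p with H ∉ I is congruent modulo I to a nonzero K-linear combination Σ_t μ_t u_t of normal words u_t ∈ N(I) all of degree p. -/
open scoped Classical

section Auxiliary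

variable {K : Type} [Field K] {n : ℕ}

lemma MonOrder.irrefl (o : MonOrder n) (u : Word n) : ¬ o.lt u u :=
  fun h => (o.wf.isIrrefl).1 u h

lemma exists_o_max (o : MonOrder n) :
    ∀ s : Finset (Word n), s.Nonempty → ∃ w ∈ s, ∀ v ∈ s, v ≠ w → o.lt v w := by
  intro s
  induction s using Finset.induction_on with
  | empty => intro h; simp at h
  | @insert a s ha ih =>
    intro _
    rcases Finset.eq_empty_or_nonempty s with rfl | hs'
    · exact ⟨a, by simp, fun v hv hne => absurd (by simpa using hv) hne⟩
    · obtain ⟨w, hw, hmax⟩ := ih hs'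
      rcases o.trichotomous a w with h | rfl | h
      · refine ⟨w, Finset.mem_insert_of_mem hw, fun v hv hne => ?_⟩
        rcases Finset.mem_insert.mp hv with rfl | hv
        · exact h
        · exact hmax v hv hne
      · refine ⟨a, Finset.mem_insert_of_mem hw, fun v hv hne => ?_⟩
        rcases Finset.mem_insert.mp hv with rfl | hv
        · exact absurd rfl hne
        · exact hmax v hv hne
      · refine ⟨a, Finset.mem_insert_self _ _, fun v hv hne => ?_⟩
        rcases Finset.mem_insert.mp hv with rfl | hv
        · exact absurd rfl hne
        · rcases eq_or_ne v w with rfl | hvw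
          · exact h
          · exact o.trans (hmax v hv hvw) h

/-- The two-sided ideal of elements all of whose monomials are divisible by a word of `Ω`. -/
noncomputable def dvdIdeal (Ω : Set (Word n)) : TwoSidedIdeal (FreeAlg K n) :=
  TwoSidedIdeal.mk' {g : FreeAlg K n | ∀ u ∈ g.coeff.support, ∃ v ∈ Ω, WDvd v u}
    (fun u hu => by simp at hu)
    (fun {x y} hx hy u hu => by
      rw [MonoidAlgebra.coeff_add] at hu
      rcases Finset.mem_union.mp (Finsupp.support_add hu) with h | h
      · exact hx u h
      · exact hy u h)
    (fun {x} hx u hu => hx u (by rwa [MonoidAlgebra.coeff_neg, Finsupp.support_neg] at hu))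
    (fun {x y} hy u hu => by
      classical
      have hu' := MonoidAlgebra.support_coeff_mul_subset x y hu
      rw [Finset.mem_mul] at hu'
      obtain ⟨s₁, hs₁, s₂, hs₂, rfl⟩ := hu'
      obtain ⟨v, hv, w, s, rfl⟩ := hy s₂ hs₂
      exact ⟨v, hv, s₁ * w, s, by simp [mul_assoc]⟩)
    (fun {x y} hx u hu => by
      classical
      have hu' := MonoidAlgebra.support_coeff_mul_subset x y hu
      rw [Finset.mem_mul] at hu'
      obtain ⟨s₁, hs₁, s₂, hs₂, rfl⟩ := hu'
      obtain ⟨v, hv, w, s, rfl⟩ := hx s₁ hs₁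
      exact ⟨v, hv, w, s * s₂, by simp [mul_assoc]⟩)

lemma mem_dvdIdeal {Ω : Set (Word n)} {f : FreeAlg K n} :
    f ∈ dvdIdeal (K := K) Ω ↔ ∀ u ∈ f.coeff.support, ∃ v ∈ Ω, WDvd v u := by
  simp [dvdIdeal, TwoSidedIdeal.mem_mk']

lemma monIdeal_dvd {Ω : Set (Word n)} {f : FreeAlg K n} (hf : f ∈ monIdeal K Ω) :
    ∀ u ∈ f.coeff.support, ∃ v ∈ Ω, WDvd v u := by
  refine mem_dvdIdeal.mp (TwoSidedIdeal.mem_span_iff.mp hf _ ?_)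
  rintro x ⟨v, hv, rfl⟩
  rw [SetLike.mem_coe, mem_dvdIdeal]
  intro u hu
  have huv : u = v := by
    simpa [mono, MonoidAlgebra.coeff_single] using hu
  exact ⟨v, hv, 1, 1, by simp [huv]⟩

lemma mono_mem_support (w : Word n) : w ∈ (mono (K := K) w).coeff.support := by
  simp [mono, MonoidAlgebra.coeff_single]

end Auxiliary
section Reduce

variable {K : Type} [Field K] {n : ℕ}

lemma reduce_step (wt : Fin n → ℕ) (o : MonOrder n) (I : TwoSidedIdeal (FreeAlg K n))
    (𝒢 : Set (FreeAlg K n)) (hGB : IsGrobnerBasis o 𝒢 I)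
    (hhom : ∀ g ∈ 𝒢, ∃ p : ℕ, IsHomogeneous wt g p)
    (f : FreeAlg K n) (p : ℕ) (hf : ∀ u ∈ f.coeff.support, wdeg wt u = p)
    (w₀ : Word n) (hw₀ : w₀ ∈ f.coeff.support)
    (hbad : mono (K := K) w₀ ∈ monIdeal K (LM o '' {h : FreeAlg K n | h ∈ I ∧ h ≠ 0})) :
    ∃ f' : FreeAlg K n, f - f' ∈ I ∧ (∀ u ∈ f'.coeff.support, wdeg wt u = p) ∧
      w₀ ∉ f'.coeff.support ∧ ∀ u ∈ f'.coeff.support, u ∈ f.coeff.support ∨ o.lt u w₀ := by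
  classical
  rw [hGB.2] at hbad
  obtain ⟨v, hvG, hdvd⟩ := monIdeal_dvd hbad w₀ (mono_mem_support w₀)
  obtain ⟨g, hg𝒢, rfl⟩ := hvG
  obtain ⟨a, b, hw⟩ := hdvd
  have hgI : g ∈ I := (hGB.1 hg𝒢).1
  have hg0 : g ≠ 0 := (hGB.1 hg𝒢).2
  obtain ⟨hLMmem, hLMmax⟩ := LM_spec o hg0
  set L := LM o g with hL
  set d : K := g.coeff L with hd_def
  have hd : d ≠ 0 := Finsupp.mem_support_iff.mp hLMmem
  set c : K := f.coeff w₀ with hc_def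
  set q : FreeAlg K n :=
    MonoidAlgebra.single a (c * d⁻¹) * (g * MonoidAlgebra.single b (1 : K)) with hq_def
  have hqI : q ∈ I := I.mul_mem_left _ _ (I.mul_mem_right _ _ hgI)
  have hq_apply : ∀ u : Word n, q.coeff (a * u * b) = c * d⁻¹ * g.coeff u := by
    intro u
    rw [hq_def, mul_assoc a u b]
    rw [MonoidAlgebra.coeff_single_mul_eq_mul_coeff (x := g * MonoidAlgebra.single b (1 : K))
      (m := a) (m₁ := a * (u * b)) (u * b) (fun t _ => ⟨fun h => mul_left_cancel h, fun h => by rw [h]⟩)]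
    rw [MonoidAlgebra.coeff_mul_single_eq_coeff_mul (x := g) (m := b) (m₁ := u * b) u
      (fun t _ => ⟨fun h => mul_right_cancel h, fun h => by rw [h]⟩)]
    rw [mul_one]
  have hq_supp : ∀ u ∈ q.coeff.support, ∃ v' ∈ g.coeff.support, u = a * v' * b := by
    intro u hu
    rw [hq_def] at hu
    have h1 := MonoidAlgebra.support_coeff_single_mul_subset
      (g * MonoidAlgebra.single b (1 : K)) (c * d⁻¹) a hu
    obtain ⟨t, ht, rfl⟩ := Finset.mem_image.mp h1
    have h2 := MonoidAlgebra.support_coeff_mul_single_subset g (1 : K) b ht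
    obtain ⟨v', hv', rfl⟩ := Finset.mem_image.mp h2
    exact ⟨v', hv', (mul_assoc _ _ _).symm⟩
  obtain ⟨pg, hpg⟩ := hhom g hg𝒢
  have hdeg : ∀ v' ∈ g.coeff.support, wdeg wt (a * v' * b) = p := by
    intro v' hv'
    have h1 : wdeg wt (a * L * b) = p := hw ▸ hf w₀ hw₀
    have h2 : wdeg wt v' = wdeg wt L := by rw [hpg v' hv', hpg L hLMmem]
    rw [wdeg_mul, wdeg_mul] at h1 ⊢
    rw [h2, h1]
  have hqw₀ : q.coeff w₀ = c := by
    rw [hw, hq_apply L, ← hd_def, mul_assoc, inv_mul_cancel₀ hd, mul_one]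
  refine ⟨f - q, ?_, ?_, ?_, ?_⟩
  · simpa using hqI
  · intro u hu
    rw [MonoidAlgebra.coeff_sub] at hu
    rcases Finset.mem_union.mp (Finsupp.support_sub hu) with h | h
    · exact hf u h
    · obtain ⟨v', hv', rfl⟩ := hq_supp u h
      exact hdeg v' hv'
  · rw [Finsupp.mem_support_iff, not_not, MonoidAlgebra.coeff_sub, Finsupp.sub_apply, hqw₀, ← hc_def, sub_self]
  · intro u hu
    rw [MonoidAlgebra.coeff_sub] at hu
    by_cases huf : u ∈ f.coeff.support
    · exact Or.inl huf
    · right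
      have huq : u ∈ q.coeff.support := by
        rcases Finset.mem_union.mp (Finsupp.support_sub hu) with h | h
        · exact absurd h huf
        · exact h
      obtain ⟨v', hv', rfl⟩ := hq_supp u huq
      have hvL : v' ≠ L := by
        rintro rfl
        exact huf (hw ▸ hw₀)
      rw [hw]
      exact o.mul_compat v' L a b (hLMmax v' hv' hvL)

end Reduce
/-- Let `I` be a graded two-sided ideal of the weight `ℕ`-graded free algebra `K⟨X⟩`, with
a homogeneous Gröbner basis `𝒢` w.r.t. a monomial ordering `≺`.  Every nonzero homogeneous
element `H` of degree `p` with `H ∉ I` is congruent modulo `I` to a nonzero `K`-linear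
combination of normal words of degree `p`. -/
theorem homogeneous_normal_form {K : Type} [Field K] {n : ℕ}
    (wt : Fin n → ℕ) (hwt : ∀ i, 0 < wt i) (o : MonOrder n)
    (I : TwoSidedIdeal (FreeAlg K n))
    (hgraded : ∀ f ∈ I, ∀ p : ℕ, MonoidAlgebra.ofCoeff (Finsupp.filter (fun w => wdeg wt w = p) f.coeff) ∈ I)
    (𝒢 : Set (FreeAlg K n)) (hGB : IsGrobnerBasis o 𝒢 I)
    (hhom : ∀ g ∈ 𝒢, ∃ p : ℕ, IsHomogeneous wt g p)
    (H : FreeAlg K n) (p : ℕ) (hH : IsHomogeneous wt H p)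
    (hH0 : H ≠ 0) (hHI : H ∉ I) :
    ∃ f : FreeAlg K n, f ≠ 0 ∧
      (∀ w ∈ f.coeff.support, wdeg wt w = p ∧
        mono (K := K) w ∉ monIdeal K (LM o '' {h : FreeAlg K n | h ∈ I ∧ h ≠ 0})) ∧
      H - f ∈ I := by

  classical
  set Mset := monIdeal K (LM o '' {h : FreeAlg K n | h ∈ I ∧ h ≠ 0}) with hMset
  have fin : ∀ f : FreeAlg K n, H - f ∈ I → (∀ u ∈ f.coeff.support, wdeg wt u = p) →
      (∀ u ∈ f.coeff.support, mono (K := K) u ∉ Mset) →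
      ∃ f : FreeAlg K n, f ≠ 0 ∧
        (∀ w ∈ f.coeff.support, wdeg wt w = p ∧ mono (K := K) w ∉ Mset) ∧ H - f ∈ I := by
    intro f h1 h2 h3
    refine ⟨f, ?_, fun u hu => ⟨h2 u hu, h3 u hu⟩, h1⟩
    rintro rfl
    exact hHI (by simpa using h1)
  have key : ∀ w₀ : Word n, ∀ f : FreeAlg K n, H - f ∈ I →
      (∀ u ∈ f.coeff.support, wdeg wt u = p) →
      (∀ u ∈ f.coeff.support, mono (K := K) u ∈ Mset → u = w₀ ∨ o.lt u w₀) →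
      ∃ f : FreeAlg K n, f ≠ 0 ∧
        (∀ w ∈ f.coeff.support, wdeg wt w = p ∧ mono (K := K) w ∉ Mset) ∧ H - f ∈ I := by
    intro w₀
    refine o.wf.induction (C := fun w₀ => ∀ f : FreeAlg K n, H - f ∈ I →
      (∀ u ∈ f.coeff.support, wdeg wt u = p) →
      (∀ u ∈ f.coeff.support, mono (K := K) u ∈ Mset → u = w₀ ∨ o.lt u w₀) →
      ∃ f : FreeAlg K n, f ≠ 0 ∧
        (∀ w ∈ f.coeff.support, wdeg wt w = p ∧ mono (K := K) w ∉ Mset) ∧ H - f ∈ I)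
      w₀ ?_
    intro w ih f hfI hfhom hfbd
    by_cases hb : ∀ u ∈ f.coeff.support, mono (K := K) u ∉ Mset
    · exact fin f hfI hfhom hb
    · push_neg at hb
      obtain ⟨u₀, hu₀f, hu₀bad⟩ := hb
      obtain ⟨m, hmB, hmmax⟩ := exists_o_max o
        (f.coeff.support.filter (fun u => mono (K := K) u ∈ Mset))
        ⟨u₀, Finset.mem_filter.mpr ⟨hu₀f, hu₀bad⟩⟩
      have hmf : m ∈ f.coeff.support := (Finset.mem_filter.mp hmB).1
      have hmbad : mono (K := K) m ∈ Mset := (Finset.mem_filter.mp hmB).2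
      obtain ⟨f', hsubI, hhom', hmnot, hsupp'⟩ :=
        reduce_step wt o I 𝒢 hGB hhom f p hfhom m hmf hmbad
      have hf'I : H - f' ∈ I := by
        have h := I.add_mem hfI hsubI
        simpa [sub_add_sub_cancel] using h
      have hbad' : ∀ u ∈ f'.coeff.support, mono (K := K) u ∈ Mset → o.lt u m := by
        intro u hu hub
        have hne : u ≠ m := fun h => hmnot (h ▸ hu)
        rcases hsupp' u hu with h | h
        · exact hmmax u (Finset.mem_filter.mpr ⟨h, hub⟩) hne
        · exact h
      by_cases hb' : ∀ u ∈ f'.coeff.support, mono (K := K) u ∉ Mset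
      · exact fin f' hf'I hhom' hb'
      · push_neg at hb'
        obtain ⟨u₁, hu₁f, hu₁bad⟩ := hb'
        obtain ⟨m₁, hm₁B, hm₁max⟩ := exists_o_max o
          (f'.coeff.support.filter (fun u => mono (K := K) u ∈ Mset))
          ⟨u₁, Finset.mem_filter.mpr ⟨hu₁f, hu₁bad⟩⟩
        have hm₁f : m₁ ∈ f'.coeff.support := (Finset.mem_filter.mp hm₁B).1
        have hm₁bad := (Finset.mem_filter.mp hm₁B).2
        have hm₁m : o.lt m₁ m := hbad' m₁ hm₁f hm₁bad
        have hm₁w : o.lt m₁ w := by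
          rcases hfbd m hmf hmbad with rfl | hmw
          · exact hm₁m
          · exact o.trans hm₁m hmw
        refine ih m₁ hm₁w f' hf'I hhom' ?_
        intro u hu hub
        rcases eq_or_ne u m₁ with rfl | hne
        · exact Or.inl rfl
        · exact Or.inr (hm₁max u (Finset.mem_filter.mpr ⟨hu, hub⟩) hne)
  by_cases hb : ∀ u ∈ H.coeff.support, mono (K := K) u ∉ Mset
  · exact fin H (by simpa using I.zero_mem) hH hb
  · push_neg at hb
    obtain ⟨u₀, hu₀f, hu₀bad⟩ := hb
    obtain ⟨m, hmB, hmmax⟩ := exists_o_max o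
      (H.coeff.support.filter (fun u => mono (K := K) u ∈ Mset))
      ⟨u₀, Finset.mem_filter.mpr ⟨hu₀f, hu₀bad⟩⟩
    refine key m H (by simpa using I.zero_mem) hH ?_
    intro u hu hub
    rcases eq_or_ne u m with rfl | hne
    · exact Or.inl rfl
    · exact Or.inr (hmmax u (Finset.mem_filter.mpr ⟨hu, hub⟩) hne)
end

section
/- Let Ω be a finite reduced set of words in the free monoid on a finite set X with Ω ∩ X = ∅, and R = K⟨X⟩/⟨Ω⟩. If every normal word u with 1 ≤ l(u) ≤ ℓ is cyclic — where ℓ is the maximal length of words in Ω and u is cyclic iff there is a word v with (uv)^q normal for all q ∈ ℕ — then R is semiprime. -/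
open scoped Classical

/- ======================= auxiliary material ======================= -/

namespace GISemiprimeAux

variable {α : Type*}

/-- normality of a list w.r.t. a set of forbidden factors -/
def LNormal (Λ : Set (List α)) (l : List α) : Prop := ∀ w ∈ Λ, ¬ w <:+: l

lemma LNormal.infix {Λ : Set (List α)} {l m : List α} (h : LNormal Λ l) (hm : m <:+: l) :
    LNormal Λ m := fun w hw hwm => h w hw (hwm.trans hm)

lemma glue {Λ : Set (List α)} {k : ℕ} (hΛ : ∀ w ∈ Λ, w.length ≤ k + 1)
    {A b C : List α} (hb : b.length = k)
    (h1 : LNormal Λ (A ++ b)) (h2 : LNormal Λ (b ++ C)) : LNormal Λ (A ++ b ++ C) := by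
  intro ω hω hinf
  obtain ⟨s, t, hst⟩ := hinf
  have hlen : s.length + ω.length + t.length = A.length + b.length + C.length := by
    have := congrArg List.length hst
    simp only [List.length_append] at this; omega
  have hωl : ω.length ≤ k + 1 := hΛ ω hω
  by_cases hc : s.length + ω.length ≤ A.length + b.length
  · apply h1 ω hω
    have hpre1 : (s ++ ω) <+: A ++ b ++ C := ⟨t, by simpa [List.append_assoc] using hst⟩
    have hpre2 : (A ++ b) <+: A ++ b ++ C := ⟨C, rfl⟩
    have := List.prefix_of_prefix_length_le hpre1 hpre2 (by simpa using hc)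
    exact ((List.suffix_append s ω).isInfix.trans this.isInfix)
  · apply h2 ω hω
    have hsuf1 : (ω ++ t) <:+ A ++ b ++ C := ⟨s, by simpa [List.append_assoc] using hst⟩
    have hsuf2 : (b ++ C) <:+ A ++ b ++ C := ⟨A, by simp [List.append_assoc]⟩
    have hlen2 : (ω ++ t).length ≤ (b ++ C).length := by
      simp only [List.length_append]
      omega
    have := List.suffix_of_suffix_length_le hsuf1 hsuf2 hlen2
    exact ((List.prefix_append ω t).isInfix.trans this.isInfix)

/-- reachability: a normal word of length ≥ 2k starting with `a` and ending with `b` -/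
def Reach (Λ : Set (List α)) (k : ℕ) (a b : List α) : Prop :=
  ∃ W, LNormal Λ W ∧ a <+: W ∧ b <:+ W ∧ 2 * k ≤ W.length

lemma Reach.trans {Λ : Set (List α)} {k : ℕ} (hΛ : ∀ w ∈ Λ, w.length ≤ k + 1)
    {a b c : List α} (hb : b.length = k) (h1 : Reach Λ k a b) (h2 : Reach Λ k b c) :
    Reach Λ k a c := by
  obtain ⟨W₁, hW₁, ha1, hb1, hl1⟩ := h1
  obtain ⟨W₂, hW₂, hb2, hc2, hl2⟩ := h2
  obtain ⟨m₁, hm₁⟩ := hb1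
  obtain ⟨m₂, hm₂⟩ := hb2
  refine ⟨m₁ ++ b ++ m₂, ?_, ?_, ?_, ?_⟩
  · exact glue hΛ hb (hm₁ ▸ hW₁) (hm₂ ▸ hW₂)
  · exact ha1.trans ⟨m₂, by rw [← hm₁]⟩
  · refine (hc2.trans ?_)
    exact ⟨m₁, by rw [List.append_assoc, hm₂]⟩
  · have : W₁.length ≤ (m₁ ++ b ++ m₂).length := by
      simp [← hm₁]
    omega

section Key

variable {Λ : Set (List α)} {ℓ : ℕ}

variable (hΛlen : ∀ w ∈ Λ, w.length ≤ ℓ) (hΛ2 : ∀ w ∈ Λ, 2 ≤ w.length)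
  (hcyc2 : ∀ u : List α, LNormal Λ u → 1 ≤ u.length → u.length ≤ ℓ →
    ∃ v, LNormal Λ (u ++ v ++ u ++ v))

set_option linter.unusedSectionVars false

include hcyc2 in
/-- the edge lemma: from any length-`ℓ` normal word one can travel back from its length-`(ℓ-1)`
suffix to its length-`(ℓ-1)` prefix inside normal words -/
lemma edge (hk : 2 ≤ ℓ) {x : List α} (hx : LNormal Λ x) (hxl : x.length = ℓ) :
    Reach Λ (ℓ - 1) (x.drop 1) (x.take (ℓ - 1)) := by
  obtain ⟨v, hv⟩ := hcyc2 x hx (by omega) (by omega)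
  set k := ℓ - 1 with hkdef
  refine ⟨x.drop 1 ++ v ++ x.take k, ?_, ?_, ?_, ?_⟩
  · refine hv.infix ?_
    refine ⟨x.take 1, x.drop k ++ v, ?_⟩
    have e1 : x.take 1 ++ x.drop 1 = x := List.take_append_drop 1 x
    have e2 : x.take k ++ x.drop k = x := List.take_append_drop k x
    calc x.take 1 ++ (x.drop 1 ++ v ++ x.take k) ++ (x.drop k ++ v)
        = x.take 1 ++ x.drop 1 ++ (v ++ (x.take k ++ x.drop k ++ v)) := by
          simp only [List.append_assoc]
      _ = x ++ (v ++ (x ++ v)) := by rw [e1, e2]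
      _ = x ++ v ++ x ++ v := by simp only [List.append_assoc]
  · exact ⟨v ++ x.take k, by simp [List.append_assoc]⟩
  · exact ⟨x.drop 1 ++ v, by simp [List.append_assoc]⟩
  · have h1 : (x.drop 1).length = k := by simp [hxl]; omega
    have h2 : (x.take k).length = k := by simp [hxl]; omega
    simp only [List.length_append, h1, h2]
    omega

include hΛlen hcyc2 in
lemma chain (hk : 2 ≤ ℓ) {u : List α} (hu : LNormal Λ u) :
    ∀ j, j + ℓ ≤ u.length →
      Reach Λ (ℓ - 1) ((u.drop (j+1)).take (ℓ - 1)) (u.take (ℓ - 1)) := by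
  intro j
  induction j with
  | zero =>
    intro hj
    have hwin : LNormal Λ ((u.drop 0).take ℓ) := hu.infix
      (((u.drop 0).take_prefix ℓ).isInfix.trans (u.drop_suffix 0).isInfix)
    have := edge hcyc2 hk hwin (by simp; omega)
    rw [List.drop_take] at this
    simpa [List.take_take, List.drop_drop, min_def, Nat.le_of_lt (by omega : ℓ - 1 < ℓ)] using this
  | succ j ih =>
    intro hj
    have ihr := ih (by omega)
    have hwin : LNormal Λ ((u.drop (j+1)).take ℓ) := hu.infix
      (((u.drop (j+1)).take_prefix ℓ).isInfix.trans (u.drop_suffix (j+1)).isInfix)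
    have hed := edge hcyc2 hk hwin (by simp; omega)
    rw [List.drop_take, List.drop_drop, List.take_take] at hed
    have hmin : min (ℓ - 1) ℓ = ℓ - 1 := by omega
    rw [hmin] at hed
    have := Reach.trans (k := ℓ - 1) (by intro w hw; have := hΛlen w hw; omega)
      (b := (u.drop (j+1)).take (ℓ-1)) (by simp; omega) hed ihr
    simpa using this

include hΛlen hΛ2 hcyc2 in
/-- key combinatorial lemma: every normal word can be completed to a normal sandwich -/
lemma key (u : List α) (hu : LNormal Λ u) : ∃ v, LNormal Λ (u ++ v ++ u) := by
  rcases Set.eq_empty_or_nonempty Λ with hΛe | ⟨ω₀, hω₀⟩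
  · exact ⟨[], fun w hw => by simp [hΛe] at hw⟩
  have hk : 2 ≤ ℓ := le_trans (hΛ2 ω₀ hω₀) (hΛlen ω₀ hω₀)
  rcases Nat.eq_zero_or_pos u.length with hu0 | hu1
  · refine ⟨[], ?_⟩
    rw [List.eq_nil_of_length_eq_zero hu0]
    intro w hw hinf
    have hwnil : w = [] := List.eq_nil_of_length_eq_zero (by
      have := hinf.length_le; simpa using this)
    have h2 := hΛ2 w hw
    rw [hwnil] at h2
    simp at h2
  rcases le_or_gt u.length ℓ with hle | hgt
  · obtain ⟨v, hv⟩ := hcyc2 u hu hu1 hle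
    exact ⟨v, hv.infix ⟨[], v, by simp [List.append_assoc]⟩⟩
  · set k := ℓ - 1 with hkdef
    have hch := chain hΛlen hcyc2 hk hu (u.length - ℓ) (by omega)
    have hsl : (u.drop (u.length - ℓ + 1)).length = k := by simp; omega
    have hs : (u.drop (u.length - ℓ + 1)).take k = u.drop (u.length - k) := by
      rw [List.take_of_length_le (le_of_eq hsl)]
      congr 1
      omega
    rw [hs] at hch
    set s := u.drop (u.length - k) with hsdef
    set p := u.take k with hpdef
    obtain ⟨W, hW, hpre, hsuf, hlen⟩ := hch
    have hslen : s.length = k := by simp [hsdef]; omega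
    have hplen : p.length = k := by simp [hpdef]; omega
    have hWs : W = s ++ W.drop k := by
      have : s = W.take k := by
        have := List.prefix_iff_eq_take.mp hpre
        rwa [hslen] at this
      rw [this, List.take_append_drop]
    have hWp : p = W.drop (W.length - k) := by
      have := List.suffix_iff_eq_drop.mp hsuf
      rwa [hplen] at this
    set v := (W.drop k).take (W.length - 2 * k) with hvdef
    have hdd : W.drop k = v ++ W.drop (W.length - k) := by
      conv_lhs => rw [← List.take_append_drop (W.length - 2*k) (W.drop k)]
      rw [List.drop_drop]
      congr 2
      omega
    have hWv : W = s ++ v ++ p := by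
      calc W = s ++ W.drop k := hWs
        _ = s ++ (v ++ W.drop (W.length - k)) := by rw [hdd]
        _ = s ++ v ++ p := by rw [← hWp, List.append_assoc]
    have hΛk : ∀ w ∈ Λ, w.length ≤ k + 1 := fun w hw => by have := hΛlen w hw; omega
    have hg1 : LNormal Λ (u.take (u.length - k) ++ s ++ (v ++ p)) := by
      apply glue hΛk hslen
      · rw [List.take_append_drop]; exact hu
      · rw [← List.append_assoc, ← hWv]; exact hW
    have hg1' : LNormal Λ ((u ++ v) ++ p) := by
      have : u.take (u.length - k) ++ s ++ (v ++ p) = (u ++ v) ++ p := by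
        rw [hsdef, List.take_append_drop, ← List.append_assoc]
      rwa [this] at hg1
    have hg2 : LNormal Λ ((u ++ v) ++ p ++ u.drop k) := by
      apply glue hΛk hplen hg1'
      rw [hpdef, List.take_append_drop]; exact hu
    refine ⟨v, ?_⟩
    have : (u ++ v) ++ p ++ u.drop k = u ++ v ++ u := by
      rw [List.append_assoc (u ++ v) p, hpdef, List.take_append_drop, List.append_assoc]
    rwa [this] at hg2

end Key

/-! algebraic auxiliary lemmas -/

lemma wdvd_iff {n : ℕ} (v u : Word n) :
    WDvd v u ↔ FreeMonoid.toList v <:+: FreeMonoid.toList u := by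
  constructor
  · rintro ⟨w, s, rfl⟩
    exact ⟨FreeMonoid.toList w, FreeMonoid.toList s, by simp⟩
  · rintro ⟨s, t, h⟩
    refine ⟨FreeMonoid.ofList s, FreeMonoid.ofList t, ?_⟩
    apply FreeMonoid.toList.injective
    simp [← h]

lemma wdvd_mul_left {n : ℕ} {ω b : Word n} (h : WDvd ω b) (a : Word n) : WDvd ω (a * b) := by
  obtain ⟨w, s, rfl⟩ := h
  exact ⟨a * w, s, by simp [mul_assoc]⟩

lemma wdvd_mul_right {n : ℕ} {ω b : Word n} (h : WDvd ω b) (a : Word n) : WDvd ω (b * a) := by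
  obtain ⟨w, s, rfl⟩ := h
  exact ⟨w, s * a, by simp [mul_assoc]⟩

lemma mem_monIdeal_iff {K : Type} [Field K] {n : ℕ} (Ω : Set (Word n)) (f : FreeAlg K n) :
    f ∈ monIdeal K Ω ↔ ∀ w ∈ f.coeff.support, ∃ ω ∈ Ω, WDvd ω w := by
  constructor
  · intro hf
    set J : TwoSidedIdeal (FreeAlg K n) := TwoSidedIdeal.mk'
      {f : FreeAlg K n | ∀ w ∈ f.coeff.support, ∃ ω ∈ Ω, WDvd ω w}
      (by simp)
      (by
        intro x y hx hy w hw
        rw [MonoidAlgebra.coeff_add] at hw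
        rcases Finset.mem_union.mp (Finsupp.support_add hw) with h | h
        exacts [hx w h, hy w h])
      (by
        intro x hx w hw
        apply hx w
        rwa [MonoidAlgebra.coeff_neg, Finsupp.support_neg] at hw)
      (by
        intro x y hy w hw
        obtain ⟨a, ha, b, hb, rfl⟩ := Finset.mem_mul.mp (MonoidAlgebra.support_coeff_mul_subset x y hw)
        obtain ⟨ω, hω, hd⟩ := hy b hb
        exact ⟨ω, hω, wdvd_mul_left hd a⟩)
      (by
        intro x y hx w hw
        obtain ⟨a, ha, b, hb, rfl⟩ := Finset.mem_mul.mp (MonoidAlgebra.support_coeff_mul_subset x y hw)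
        obtain ⟨ω, hω, hd⟩ := hx a ha
        exact ⟨ω, hω, wdvd_mul_right hd b⟩) with hJ
    have hsub : (mono '' Ω : Set (FreeAlg K n)) ⊆ J := by
      rintro _ ⟨ω, hω, rfl⟩
      rw [SetLike.mem_coe, hJ, TwoSidedIdeal.mem_mk']
      intro w hw
      have : w = ω := by
        have := Finsupp.support_single_subset (show w ∈ (Finsupp.single ω (1:K)).support from hw)
        simpa using this
      exact ⟨ω, hω, this ▸ ⟨1, 1, by simp⟩⟩
    have := TwoSidedIdeal.mem_span_iff.mp hf J hsub
    rw [hJ, TwoSidedIdeal.mem_mk'] at this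
    exact this
  · intro hf
    have hrep : f = ∑ w ∈ f.coeff.support, MonoidAlgebra.single w (f.coeff w) :=
      (MonoidAlgebra.sum_coeff_single f).symm
    rw [hrep]
    apply TwoSidedIdeal.finsetSum_mem
    intro w hw
    obtain ⟨ω, hω, a, b, rfl⟩ := hf w hw
    have : (MonoidAlgebra.single (a * ω * b) (f.coeff (a * ω * b)) : FreeAlg K n)
        = MonoidAlgebra.single a (f.coeff (a * ω * b)) * mono ω * mono b := by
      simp [mono, MonoidAlgebra.single_mul_single]
    rw [this]
    apply TwoSidedIdeal.mul_mem_right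
    apply TwoSidedIdeal.mul_mem_left
    exact TwoSidedIdeal.subset_span ⟨ω, hω, rfl⟩

lemma eq_of_sandwich {n : ℕ} {a b V u : Word n}
    (ha : (FreeMonoid.toList a).length ≤ (FreeMonoid.toList u).length)
    (hb : (FreeMonoid.toList b).length ≤ (FreeMonoid.toList u).length)
    (heq : a * V * b = u * V * u) : a = u ∧ b = u := by
  have heql : (FreeMonoid.toList a ++ FreeMonoid.toList V) ++ FreeMonoid.toList b
      = (FreeMonoid.toList u ++ FreeMonoid.toList V) ++ FreeMonoid.toList u := by
    simpa using congrArg FreeMonoid.toList heq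
  have hlen := congrArg List.length heql
  simp only [List.length_append] at hlen
  have h1 : ((FreeMonoid.toList a ++ FreeMonoid.toList V)).length
      = ((FreeMonoid.toList u ++ FreeMonoid.toList V)).length := by
    simp only [List.length_append]; omega
  obtain ⟨h2, h3⟩ := List.append_inj heql h1
  have h4 := List.append_cancel_right h2
  exact ⟨FreeMonoid.toList.injective h4, FreeMonoid.toList.injective h3⟩

lemma triple_apply {K : Type} [Field K] {n : ℕ} (g : FreeAlg K n) (V u : Word n)
    (humax : ∀ b ∈ g.coeff.support, (FreeMonoid.toList b).length ≤ (FreeMonoid.toList u).length)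
    (hu : u ∈ g.coeff.support) :
    (g * mono V * g : FreeAlg K n).coeff (u * V * u) = g.coeff u * g.coeff u := by
  have hg : g = ∑ a ∈ g.coeff.support, MonoidAlgebra.single a (g.coeff a) :=
    (MonoidAlgebra.sum_coeff_single g).symm
  have hexp : g * mono V * g = ∑ a ∈ g.coeff.support, ∑ b ∈ g.coeff.support,
      MonoidAlgebra.single (a * V * b) (g.coeff a * g.coeff b) := by
    conv_lhs => rw [hg]
    rw [Finset.sum_mul, Finset.sum_mul_sum]
    refine Finset.sum_congr rfl fun a _ => Finset.sum_congr rfl fun b _ => ?_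
    simp [mono, MonoidAlgebra.single_mul_single]
  have happ : (g * mono V * g : FreeAlg K n).coeff (u * V * u)
      = ∑ a ∈ g.coeff.support, ∑ b ∈ g.coeff.support,
      (if a * V * b = u * V * u then g.coeff a * g.coeff b else 0) := by
    rw [hexp, MonoidAlgebra.coeff_sum, Finsupp.finset_sum_apply]
    refine Finset.sum_congr rfl fun a _ => ?_
    rw [MonoidAlgebra.coeff_sum, Finsupp.finset_sum_apply]
    refine Finset.sum_congr rfl fun b _ => ?_
    exact Finsupp.single_apply
  rw [happ]
  rw [Finset.sum_eq_single_of_mem u hu]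
  · rw [Finset.sum_eq_single_of_mem u hu]
    · simp
    · intro b hb hne
      rw [if_neg]
      intro heq
      exact hne (eq_of_sandwich (humax u hu) (humax b hb) heq).2
  · intro a ha hne
    apply Finset.sum_eq_zero
    intro b hb
    rw [if_neg]
    intro heq
    exact hne (eq_of_sandwich (humax a ha) (humax b hb) heq).1

end GISemiprimeAux

/-- One direction of Gateva-Ivanova's criterion: let `Ω` be a finite reduced set of words
with `Ω ∩ X = ∅` and `ℓ` the maximal length of words in `Ω`.  If every normal word `u`
with `1 ≤ l(u) ≤ ℓ` is cyclic (i.e. there is a word `v` with `(uv)^q` normal for all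
`q ∈ ℕ`), then `R = K⟨X⟩/⟨Ω⟩` is semiprime. -/
theorem monomialAlgebra_semiprime_of_short_normal_words_cyclic {K : Type} [Field K] {n : ℕ}
    (Ω : Set (Word n)) (hfin : Ω.Finite)
    (hnotX : ∀ w ∈ Ω, ∀ i : Fin n, w ≠ FreeMonoid.of i)
    (hred : ∀ u ∈ Ω, ∀ v ∈ Ω, u ≠ v → ¬ WDvd u v)
    (ℓ : ℕ) (hℓ : ℓ = hfin.toFinset.sup (fun w => (FreeMonoid.toList w).length))
    (hcyc : ∀ u : Word n, (¬ ∃ ω ∈ Ω, WDvd ω u) →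
      1 ≤ (FreeMonoid.toList u).length → (FreeMonoid.toList u).length ≤ ℓ →
      ∃ v : Word n, ∀ q : ℕ, ¬ ∃ ω ∈ Ω, WDvd ω ((u * v) ^ q)) :
    IsSemiprimeRing (monIdeal K Ω).ringCon.Quotient := by
    classical
  intro a ha
  by_contra hne0
  obtain ⟨f, rfl⟩ := Quotient.exists_rep a
  set Q := (monIdeal K Ω).ringCon.Quotient
  set I := monIdeal K Ω with hI
  have hzero : ∀ x : FreeAlg K n, (x : Q) = 0 ↔ x ∈ I := by
    intro x
    rw [show (0 : Q) = ((0 : FreeAlg K n) : Q) from (RingCon.coe_zero _).symm,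
      RingCon.eq, TwoSidedIdeal.rel_iff, sub_zero]
  set N : Word n → Prop := fun w => ¬ ∃ ω ∈ Ω, WDvd ω w with hN
  set g : FreeAlg K n := MonoidAlgebra.ofCoeff (Finsupp.filter N f.coeff) with hg
  have hfg : f - g ∈ I := by
    rw [hI, GISemiprimeAux.mem_monIdeal_iff]
    intro w hw
    rw [Finsupp.mem_support_iff] at hw
    by_cases hNw : N w
    · exfalso
      apply hw
      rw [MonoidAlgebra.coeff_sub, Finsupp.sub_apply, hg, MonoidAlgebra.coeff_ofCoeff, Finsupp.filter_apply, if_pos hNw, sub_self]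
    · obtain ⟨ω, hω, hd⟩ := not_not.mp hNw
      exact ⟨ω, hω, hd⟩
  have hga : (g : Q) = (f : Q) := by
    rw [RingCon.eq, TwoSidedIdeal.rel_iff]
    simpa using I.neg_mem hfg
  have hfQ : (f : Q) = (⟦f⟧ : Q) := rfl
  have hgI : g ∉ I := by
    intro hgmem
    apply hne0
    have hfI : f ∈ I := by
      have := I.add_mem hfg hgmem
      simpa using this
    rw [← hfQ]
    exact (hzero f).mpr hfI
  have hgne0 : g ≠ 0 := fun h => hgI (h ▸ I.zero_mem)
  have hsupN : ∀ w ∈ g.coeff.support, N w := by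
    intro w hw
    rw [hg, MonoidAlgebra.coeff_ofCoeff, Finsupp.support_filter, Finset.mem_filter] at hw
    exact hw.2
  obtain ⟨u, hu, humax⟩ := Finset.exists_max_image g.coeff.support
    (fun w => (FreeMonoid.toList w).length)
    (Finsupp.support_nonempty_iff.mpr (fun h => hgne0 (MonoidAlgebra.coeff_eq_zero.mp h)))
  have hNu : N u := hsupN u hu
  -- set up the combinatorial data
  set Λ : Set (List (Fin n)) := FreeMonoid.toList '' Ω with hΛ
  have bridge : ∀ w : Word n, N w ↔ GISemiprimeAux.LNormal Λ (FreeMonoid.toList w) := by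
    intro w
    constructor
    · rintro h l ⟨ω, hω, rfl⟩ hinf
      exact h ⟨ω, hω, (GISemiprimeAux.wdvd_iff ω w).mpr hinf⟩
    · rintro h ⟨ω, hω, hd⟩
      exact h (FreeMonoid.toList ω) ⟨ω, hω, rfl⟩ ((GISemiprimeAux.wdvd_iff ω w).mp hd)
  have hΛlen : ∀ l ∈ Λ, l.length ≤ ℓ := by
    rintro _ ⟨ω, hω, rfl⟩
    rw [hℓ]
    exact Finset.le_sup (f := fun w => (FreeMonoid.toList w).length) (by simpa using hω)
  have hΛ2 : ∀ l ∈ Λ, 2 ≤ l.length := by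
    rintro _ ⟨ω, hω, rfl⟩
    rcases hl : FreeMonoid.toList ω with _ | ⟨i, tl⟩
    · exfalso
      have hω1 : ω = 1 := FreeMonoid.toList.injective (by simp [hl])
      exact hNu ⟨ω, hω, ⟨1, u, by rw [hω1]; simp⟩⟩
    · rcases tl with _ | ⟨j, tl2⟩
      · exfalso
        have : ω = FreeMonoid.of i := FreeMonoid.toList.injective (by simp [hl])
        exact hnotX ω hω i this
      · simp [hl]
  have hcyc2 : ∀ l : List (Fin n), GISemiprimeAux.LNormal Λ l → 1 ≤ l.length →
      l.length ≤ ℓ → ∃ v, GISemiprimeAux.LNormal Λ (l ++ v ++ l ++ v) := by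
    intro l hl h1 h2
    set U : Word n := FreeMonoid.ofList l with hU
    have hNU : N U := (bridge U).mpr (by simpa [hU] using hl)
    obtain ⟨v, hv⟩ := hcyc U hNU (by simpa [hU]) (by simpa [hU])
    refine ⟨FreeMonoid.toList v, ?_⟩
    have h2q : N ((U * v) ^ 2) := hv 2
    have hLn := (bridge _).mp h2q
    have hpow : FreeMonoid.toList ((U * v) ^ 2)
        = l ++ FreeMonoid.toList v ++ l ++ FreeMonoid.toList v := by
      rw [sq]
      simp [hU, List.append_assoc]
    rwa [hpow] at hLn
  obtain ⟨v, hv⟩ := GISemiprimeAux.key hΛlen hΛ2 hcyc2 (FreeMonoid.toList u)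
    ((bridge u).mp hNu)
  set V : Word n := FreeMonoid.ofList v with hV
  have hNuVu : N (u * V * u) := by
    apply (bridge _).mpr
    have : FreeMonoid.toList (u * V * u) = FreeMonoid.toList u ++ v ++ FreeMonoid.toList u := by
      simp [hV]
    rwa [this]
  -- final contradiction
  have h0 : ((g * mono V * g : FreeAlg K n) : Q) = 0 := by
    rw [RingCon.coe_mul, RingCon.coe_mul, hga]
    exact ha _
  have hmem := (hzero _).mp h0
  rw [hI, GISemiprimeAux.mem_monIdeal_iff] at hmem
  have hcoeff := GISemiprimeAux.triple_apply g V u humax hu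
  have hguz : g.coeff u ≠ 0 := Finsupp.mem_support_iff.mp hu
  have hsupp : (u * V * u) ∈ (g * mono V * g).coeff.support := by
    rw [Finsupp.mem_support_iff]
    rw [show (g * mono V * g : FreeAlg K n).coeff (u * V * u) = g.coeff u * g.coeff u from hcoeff]
    exact mul_ne_zero hguz hguz
  exact hNuVu (hmem _ hsupp)
end
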